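/- Let m ≥ 1 and let g : ℂ^m → ℂ be any entire function depending only on the differences z₂-z₁, …, z_m-z_{m-1}. Then f(z) = 1 - (-(z₁+⋯+z_m)/(2m) + g(z))² satisfies (∑_{j=1}^m ∂f/∂z_j(z))² + f(z) = 1 for all z ∈ ℂ^m. -/
import Mathlib


theorem stmt16
    (m : ℕ) (hm : 1 ≤ m)
    (g : (Fin m → ℂ) → ℂ) (hg : Differentiable ℂ g)
    (G : (Fin (m - 1) → ℂ) → ℂ) (hG : Differentiable ℂ G)
    (hgG : ∀ z : Fin m → ℂ,
      g z = G (fun i : Fin (m - 1) =>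
        z ⟨i.val + 1, by have := i.isLt; omega⟩ - z ⟨i.val, by have := i.isLt; omega⟩))
    (f : (Fin m → ℂ) → ℂ)
    (hf : ∀ z : Fin m → ℂ, f z = 1 - (-(∑ j, z j) / (2 * m) + g z) ^ 2) :
    ∀ z : Fin m → ℂ,
      (∑ j : Fin m, fderiv ℂ f z (Pi.single j 1)) ^ 2 + f z = 1 := by
  have hm0 : (m : ℂ) ≠ 0 := by
    exact_mod_cast Nat.cast_ne_zero.mpr (by omega)
  set L : (Fin m → ℂ) →L[ℂ] (Fin (m - 1) → ℂ) :=
    ContinuousLinearMap.pi (fun i : Fin (m - 1) =>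
      ContinuousLinearMap.proj ⟨i.val + 1, by have := i.isLt; omega⟩
        - ContinuousLinearMap.proj ⟨i.val, by have := i.isLt; omega⟩) with hL
  have hLapp : ∀ (v : Fin m → ℂ) (i : Fin (m - 1)),
      L v i = v ⟨i.val + 1, by have := i.isLt; omega⟩ - v ⟨i.val, by have := i.isLt; omega⟩ := by
    intro v i
    simp [hL]
  set S : (Fin m → ℂ) →L[ℂ] ℂ := ∑ j : Fin m, ContinuousLinearMap.proj j with hS
  have hSapp : ∀ v : Fin m → ℂ, S v = ∑ j, v j := by
    intro v
    simp [hS, ContinuousLinearMap.sum_apply]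
  set c : ℂ := -(2 * (m : ℂ))⁻¹ with hc
  set h : (Fin m → ℂ) → ℂ := fun w => -(∑ j, w j) / (2 * m) + g w with hh
  have hfh : f = fun w => 1 - h w * h w := by
    funext w
    rw [hf w]
    simp only [hh]
    ring
  have hheq : h = fun w => (c • S) w + G (L w) := by
    funext w
    simp only [hh, ContinuousLinearMap.smul_apply, hSapp, hgG w, smul_eq_mul]
    have : (fun i : Fin (m - 1) =>
        w ⟨i.val + 1, by have := i.isLt; omega⟩ - w ⟨i.val, by have := i.isLt; omega⟩) = L w := by
      funext i; rw [hLapp]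
    rw [this]
    congr 1
    rw [hc]
    field_simp
  intro z
  set D : (Fin m → ℂ) →L[ℂ] ℂ := c • S + (fderiv ℂ G (L z)).comp L with hD
  have hhd : HasFDerivAt h D z := by
    rw [hheq]
    exact ((c • S).hasFDerivAt).add (((hG (L z)).hasFDerivAt).comp z L.hasFDerivAt)
  set φ : (Fin m → ℂ) →L[ℂ] ℂ := (0 : (Fin m → ℂ) →L[ℂ] ℂ) - (h z • D + h z • D) with hφ
  have hfd : HasFDerivAt f φ z := by
    rw [hfh]
    exact (hasFDerivAt_const 1 z).sub (hhd.mul hhd)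
  have hfderiv : fderiv ℂ f z = φ := hfd.fderiv
  have hones : (∑ j : Fin m, Pi.single j (1 : ℂ)) = fun _ => (1 : ℂ) :=
    Finset.univ_sum_single (fun _ => (1 : ℂ))
  have hsum : ∑ j : Fin m, fderiv ℂ f z (Pi.single j 1) = φ (fun _ => 1) := by
    rw [hfderiv, ← map_sum, hones]
  have hLones : L (fun _ => (1 : ℂ)) = 0 := by
    funext i
    rw [hLapp]
    simp
  have hSones : S (fun _ => (1 : ℂ)) = (m : ℂ) := by
    rw [hSapp]
    simp
  have hφones : φ (fun _ => (1 : ℂ)) = h z := by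
    simp only [hφ, hD, ContinuousLinearMap.sub_apply, ContinuousLinearMap.zero_apply,
      ContinuousLinearMap.add_apply, ContinuousLinearMap.smul_apply,
      ContinuousLinearMap.comp_apply, hLones, map_zero, hSones, smul_eq_mul]
    rw [hc]
    field_simp
    ring
  rw [hsum, hφones, hfh]
  ring
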